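/- For the two-particle Calogero–Moser system, the variables P₁ = (1/2)(p₁+p₂), P₂ = (1/4)ln((p₁−p₂)² + 4g²/(q₁−q₂)²), Q₁ = q₁+q₂, Q₂ = (q₁−q₂)(p₁−p₂) satisfy the canonical relations {Q₁,Q₂} = {P₁,P₂} = 0 and {Q_i,P_j} = δ_{ij}, on the region where q₁ ≠ q₂ and g ≠ 0. -/

import Mathlib

set_option maxHeartbeats 2000000

open Real

abbrev Phase2 := (Fin 2 → ℝ) × (Fin 2 → ℝ)

noncomputable def poisson (F G : Phase2 → ℝ) (x : Phase2) : ℝ :=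
  ∑ i : Fin 2,
    (fderiv ℝ F x (Pi.single i 1, 0) * fderiv ℝ G x (0, Pi.single i 1)
      - fderiv ℝ G x (Pi.single i 1, 0) * fderiv ℝ F x (0, Pi.single i 1))

noncomputable def cq (i : Fin 2) : Phase2 →L[ℝ] ℝ :=
  (ContinuousLinearMap.proj i).comp (ContinuousLinearMap.fst ℝ (Fin 2 → ℝ) (Fin 2 → ℝ))

noncomputable def cp (i : Fin 2) : Phase2 →L[ℝ] ℝ :=
  (ContinuousLinearMap.proj i).comp (ContinuousLinearMap.snd ℝ (Fin 2 → ℝ) (Fin 2 → ℝ))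

lemma hq (x : Phase2) (i : Fin 2) : HasFDerivAt (fun y : Phase2 => y.1 i) (cq i) x :=
  (cq i).hasFDerivAt

lemma hp (x : Phase2) (i : Fin 2) : HasFDerivAt (fun y : Phase2 => y.2 i) (cp i) x :=
  (cp i).hasFDerivAt

@[simp] lemma cq_apply (i : Fin 2) (v w : Fin 2 → ℝ) : cq i (v, w) = v i := rfl
@[simp] lemma cp_apply (i : Fin 2) (v w : Fin 2 → ℝ) : cp i (v, w) = w i := rfl

/-- The action–angle variables of the two-particle Calogero–Moser system
satisfy the canonical relations on the region `q₁ ≠ q₂`, `g ≠ 0`. -/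
theorem stmt_14 (g : ℝ) (hg : g ≠ 0) (P₁ P₂ Q₁ Q₂ : Phase2 → ℝ)
    (hP₁def : P₁ = fun x => 1 / 2 * (x.2 0 + x.2 1))
    (hP₂def : P₂ = fun x => 1 / 4 * Real.log
      ((x.2 0 - x.2 1) ^ 2 + 4 * g ^ 2 / (x.1 0 - x.1 1) ^ 2))
    (hQ₁def : Q₁ = fun x => x.1 0 + x.1 1)
    (hQ₂def : Q₂ = fun x => (x.1 0 - x.1 1) * (x.2 0 - x.2 1)) :
    ∀ x : Phase2, x.1 0 ≠ x.1 1 →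
      poisson Q₁ Q₂ x = 0 ∧ poisson P₁ P₂ x = 0 ∧
      poisson Q₁ P₁ x = 1 ∧ poisson Q₂ P₂ x = 1 ∧
      poisson Q₁ P₂ x = 0 ∧ poisson Q₂ P₁ x = 0 := by
  subst hP₁def hP₂def hQ₁def hQ₂def
  intro x hx
  have ha0 : x.1 0 - x.1 1 ≠ 0 := sub_ne_zero.mpr hx
  have hQ1 : HasFDerivAt (fun y : Phase2 => y.1 0 + y.1 1) (cq 0 + cq 1) x :=
    (hq x 0).add (hq x 1)
  have hQ2 := ((hq x 0).sub (hq x 1)).mul ((hp x 0).sub (hp x 1))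
  have hP1 := ((hp x 0).add (hp x 1)).const_mul (1/2 : ℝ)
  have hden : (x.1 0 - x.1 1)^2 ≠ 0 := pow_ne_zero _ ha0
  have hqsq : HasFDerivAt (fun y : Phase2 => (y.1 0 - y.1 1)^2)
      ((2*(x.1 0 - x.1 1)) • (cq 0 - cq 1)) x := by
    have := ((hq x 0).sub (hq x 1)).mul ((hq x 0).sub (hq x 1))
    have h2 : ((x.1 0 - x.1 1) • (cq 0 - cq 1) + (x.1 0 - x.1 1) • (cq 0 - cq 1))
        = (2*(x.1 0 - x.1 1)) • (cq 0 - cq 1) := by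
      rw [← add_smul]; ring_nf
    simp only [Pi.sub_apply] at this
    rw [h2] at this
    refine this.congr_of_eventuallyEq (Filter.Eventually.of_forall fun y => ?_)
    simp only [Pi.mul_apply, Pi.sub_apply, pow_two]
  have hpsq : HasFDerivAt (fun y : Phase2 => (y.2 0 - y.2 1)^2)
      ((2*(x.2 0 - x.2 1)) • (cp 0 - cp 1)) x := by
    have := ((hp x 0).sub (hp x 1)).mul ((hp x 0).sub (hp x 1))
    have h2 : ((x.2 0 - x.2 1) • (cp 0 - cp 1) + (x.2 0 - x.2 1) • (cp 0 - cp 1))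
        = (2*(x.2 0 - x.2 1)) • (cp 0 - cp 1) := by
      rw [← add_smul]; ring_nf
    simp only [Pi.sub_apply] at this
    rw [h2] at this
    refine this.congr_of_eventuallyEq (Filter.Eventually.of_forall fun y => ?_)
    simp only [Pi.mul_apply, Pi.sub_apply, pow_two]
  have hinv : HasFDerivAt (fun y : Phase2 => ((y.1 0 - y.1 1)^2)⁻¹)
      ((-(((x.1 0 - x.1 1)^2) ^ 2)⁻¹) • ((2*(x.1 0 - x.1 1)) • (cq 0 - cq 1))) x := by
    have := (hasDerivAt_inv hden).comp_hasFDerivAt x hqsq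
    exact this
  have hdiv0 := hinv.const_mul (4*g^2 : ℝ)
  have hdiv : HasFDerivAt (fun y : Phase2 => 4*g^2 / (y.1 0 - y.1 1)^2)
      ((4*g^2 : ℝ) • ((-(((x.1 0 - x.1 1)^2) ^ 2)⁻¹) •
        ((2*(x.1 0 - x.1 1)) • (cq 0 - cq 1)))) x := by
    simpa only [div_eq_mul_inv] using hdiv0
  have hinner := hpsq.add hdiv
  have hu0 : (x.2 0 - x.2 1)^2 + 4*g^2/(x.1 0 - x.1 1)^2 > 0 := by positivity
  have hP2 := (hinner.log hu0.ne').const_mul (1/4 : ℝ)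
  have fQ1 := hQ1.fderiv
  have fQ2 : fderiv ℝ (fun y : Phase2 => (y.1 0 - y.1 1) * (y.2 0 - y.2 1)) x = _ := hQ2.fderiv
  have fP1 : fderiv ℝ (fun y : Phase2 => 1 / 2 * (y.2 0 + y.2 1)) x = _ := hP1.fderiv
  have fP2 : fderiv ℝ (fun y : Phase2 => 1 / 4 * Real.log
      ((y.2 0 - y.2 1) ^ 2 + 4 * g ^ 2 / (y.1 0 - y.1 1) ^ 2)) x = _ := hP2.fderiv
  refine ⟨?_, ?_, ?_, ?_, ?_, ?_⟩ <;>
  · simp only [poisson, fQ1, fQ2, fP1, fP2, Fin.sum_univ_two]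
    simp only [ContinuousLinearMap.add_apply, ContinuousLinearMap.sub_apply,
      ContinuousLinearMap.smul_apply, cq_apply, cp_apply, Pi.single_eq_same,
      ne_eq, Pi.single_eq_of_ne, smul_eq_mul, Pi.zero_apply,
      one_ne_zero, zero_ne_one, Fin.isValue]
    norm_num
    try field_simp
    try ring
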